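/- If all elements larger than i have already left the input, the deque state has end elements i and j with i < j and is not a sandwich state, then the permutation is sortable from this state if and only if the remaining input, reduced to a permutation, is sortable on two parallel stacks. -/

import Mathlib

/-- State of a deque switchyard: output so far, the deque, remaining input. -/
structure DState where
  output : List ℕ
  deque : List ℕ
  input : List ℕ

/-- One step of deque sorting: push the next input element to either end of the
deque, or pop either end element of the deque to the output. -/
inductive DequeStep : DState → DState → Prop
  | pushLeft (o d i : List ℕ) (x : ℕ) : DequeStep ⟨o, d, x :: i⟩ ⟨o, x :: d, i⟩
  | pushRight (o d i : List ℕ) (x : ℕ) : DequeStep ⟨o, d, x :: i⟩ ⟨o, d ++ [x], i⟩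
  | popLeft (o d i : List ℕ) (x : ℕ) : DequeStep ⟨o, x :: d, i⟩ ⟨o ++ [x], d, i⟩
  | popRight (o d i : List ℕ) (x : ℕ) : DequeStep ⟨o, d ++ [x], i⟩ ⟨o ++ [x], d, i⟩

/-- A permutation (as a list) is deque-sortable if some run outputs `1, 2, …, n`. -/
def DequeSortable (l : List ℕ) : Prop :=
  Relation.ReflTransGen DequeStep ⟨[], [], l⟩ ⟨List.range' 1 l.length, [], []⟩

/-- State of a two-parallel-stack switchyard. -/
structure PState where
  output : List ℕ
  stack1 : List ℕ
  stack2 : List ℕ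
  input : List ℕ

/-- One step of sorting on two parallel stacks: push the next input element onto
either stack, or pop the top of either stack to the output. -/
inductive ParStep : PState → PState → Prop
  | push1 (o s t i : List ℕ) (x : ℕ) : ParStep ⟨o, s, t, x :: i⟩ ⟨o, x :: s, t, i⟩
  | push2 (o s t i : List ℕ) (x : ℕ) : ParStep ⟨o, s, t, x :: i⟩ ⟨o, s, x :: t, i⟩
  | pop1 (o s t i : List ℕ) (x : ℕ) : ParStep ⟨o, x :: s, t, i⟩ ⟨o ++ [x], s, t, i⟩
  | pop2 (o s t i : List ℕ) (x : ℕ) : ParStep ⟨o, s, x :: t, i⟩ ⟨o ++ [x], s, t, i⟩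

/-- A permutation (as a list) is sortable on two parallel stacks. -/
def TwoStackSortable (l : List ℕ) : Prop :=
  Relation.ReflTransGen ParStep ⟨[], [], [], l⟩ ⟨List.range' 1 l.length, [], [], []⟩

/-- A deque list is a sandwich if some element lies between two larger elements. -/
def Sandwich (d : List ℕ) : Prop :=
  ∃ (u v w t : List ℕ) (j i k : ℕ),
    d = u ++ j :: v ++ i :: w ++ k :: t ∧ i < j ∧ i < k

/-- Reduce a list of distinct naturals to a permutation pattern on `{1,…,len}`,
replacing each entry by its rank. -/
def reduceList (l : List ℕ) : List ℕ :=
  l.map (fun x => l.countP (fun y => y < x) + 1)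


/-! ### Auxiliary lemmas -/

lemma DequeStep.output_prefix' {a b : DState} (h : DequeStep a b) : a.output <+: b.output := by
  cases h <;> simp

lemma deque_output_prefix {a b : DState} (h : Relation.ReflTransGen DequeStep a b) :
    a.output <+: b.output := by
  induction h with
  | refl => exact List.prefix_refl _
  | tail _ h2 ih => exact ih.trans h2.output_prefix'

lemma DequeStep.multiset' {a b : DState} (h : DequeStep a b) :
    (a.output : Multiset ℕ) + a.deque + a.input = (b.output : Multiset ℕ) + b.deque + b.input := by
  cases h <;> simp <;>
    exact List.Perm.append_left _ List.perm_middle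

lemma deque_multiset {a b : DState} (h : Relation.ReflTransGen DequeStep a b) :
    (a.output : Multiset ℕ) + a.deque + a.input = (b.output : Multiset ℕ) + b.deque + b.input := by
  induction h with
  | refl => rfl
  | tail _ h2 ih => exact ih.trans h2.multiset'

lemma key_lemma {c n : ℕ} {dq ii : List ℕ} {x : ℕ}
    (h : Relation.ReflTransGen DequeStep ⟨List.range' 1 c ++ [x], dq, ii⟩ ⟨List.range' 1 n, [], []⟩) :
    x = c + 1 ∧ ∀ y, (y ∈ dq ∨ y ∈ ii) → c + 2 ≤ y := by
  obtain ⟨r, hr⟩ := deque_output_prefix h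
  simp only at hr
  have hlen : c + 1 + r.length = n := by
    have := congrArg List.length hr; simp at this; omega
  have hsplit : List.range' 1 n = List.range' 1 c ++ List.range' (1 + c) (n - c) := by
    have h := List.range'_append (s := 1) (m := c) (n := n - c) (step := 1)
    simp only [one_mul] at h
    rw [show List.range' 1 n = List.range' 1 (c + (n - c)) by congr 1; omega, ← h]
  rw [hsplit] at hr
  have h2 : [x] ++ r = List.range' (1 + c) (n - c) := by
    rw [List.append_assoc] at hr
    exact List.append_cancel_left hr
  have hnc : n - c = (n - c - 1) + 1 := by omega
  rw [hnc, List.range'_succ] at h2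
  have hx : x = c + 1 := by
    have := congrArg List.head? h2; simp at this; omega
  have hrr : r = List.range' (1 + c + 1) (n - c - 1) := by
    have := congrArg List.tail h2; simpa using this
  refine ⟨hx, ?_⟩
  have hms := deque_multiset h
  simp only at hms
  rw [hsplit, hnc, List.range'_succ] at hms
  have hms' : ((List.range' 1 c ++ [x] : List ℕ) : Multiset ℕ) + ((dq : Multiset ℕ) + ii)
      = ((List.range' 1 c ++ [x] : List ℕ) : Multiset ℕ) + (List.range' (1+c+1) (n-c-1) : List ℕ) := by
    rw [← add_assoc, hms]
    simp [hx, Nat.add_comm 1 c]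
  have hdi : (dq : Multiset ℕ) + ii = (List.range' (1+c+1) (n-c-1) : List ℕ) :=
    add_left_cancel hms'
  intro y hy
  have hy' : y ∈ (dq : Multiset ℕ) + (ii : Multiset ℕ) := by
    rcases hy with hy | hy <;> simp [hy]
  rw [hdi] at hy'
  simp [List.mem_range'_1] at hy'
  omega

lemma sandwich_cons {a : ℕ} {d : List ℕ} (h : Sandwich d) : Sandwich (a :: d) := by
  obtain ⟨u, v, w, t, j, i, k, hd, h1, h2⟩ := h
  exact ⟨a :: u, v, w, t, j, i, k, by rw [hd]; rfl, h1, h2⟩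

lemma sandwich_concat {a : ℕ} {d : List ℕ} (h : Sandwich d) : Sandwich (d ++ [a]) := by
  obtain ⟨u, v, w, t, j, i, k, hd, h1, h2⟩ := h
  exact ⟨u, v, w, t ++ [a], j, i, k, by rw [hd]; simp, h1, h2⟩

lemma min_at_end {d : List ℕ} {x : ℕ} (hnd : d.Nodup) (hmin : ∀ y ∈ d, x ≤ y)
    (hx : x ∈ d) (hns : ¬ Sandwich d) :
    (∃ d', d = x :: d') ∨ (∃ d', d = d' ++ [x]) := by
  obtain ⟨u, v, hd⟩ := List.append_of_mem hx
  rcases u with _ | ⟨a, u'⟩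
  · exact Or.inl ⟨v, by simpa using hd⟩
  rcases v.eq_nil_or_concat with hv | ⟨w, b, hv⟩
  · exact Or.inr ⟨a :: u', by rw [hd, hv]⟩
  exfalso
  apply hns
  subst hd hv
  have hnd' := hnd
  rw [List.nodup_middle] at hnd'
  have hxa : x ≠ a := by
    intro h; subst h; exact (List.nodup_cons.mp hnd').1 (by simp)
  have hxb : x ≠ b := by
    intro h; subst h; exact (List.nodup_cons.mp hnd').1 (by simp)
  have ha : x < a := lt_of_le_of_ne (hmin a (by simp)) hxa
  have hb : x < b := lt_of_le_of_ne (hmin b (by simp)) hxb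
  exact ⟨[], u', w, [], a, x, b, by simp, ha, hb⟩

lemma pop_all : ∀ (len a : ℕ) (d O : List ℕ), d.Perm (List.range' a len) → ¬ Sandwich d →
    Relation.ReflTransGen DequeStep ⟨O, d, []⟩ ⟨O ++ List.range' a len, [], []⟩ := by
  intro len
  induction len with
  | zero =>
    intro a d O hp _
    have : d = [] := List.perm_nil.mp (by simpa using hp)
    subst this
    simpa using Relation.ReflTransGen.refl
  | succ len ih =>
    intro a d O hp hns
    have hnd : d.Nodup := hp.nodup_iff.mpr (List.nodup_range' (s := a) (n := len+1))
    have hmem : ∀ y ∈ d, y ∈ List.range' a (len+1) := fun y hy => hp.mem_iff.mp hy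
    have hmin : ∀ y ∈ d, a ≤ y := fun y hy => (List.mem_range'_1.mp (hmem y hy)).1
    have hxa : a ∈ d := hp.mem_iff.mpr (by simp [List.mem_range'_1])
    have hsucc : List.range' a (len+1) = a :: List.range' (a+1) len := List.range'_succ (s := a) (n := len) (step := 1)
    rcases min_at_end hnd hmin hxa hns with ⟨d', hd⟩ | ⟨d', hd⟩
    · subst hd
      have hp' : d'.Perm (List.range' (a+1) len) := by
        rw [hsucc] at hp
        exact (List.perm_cons a).mp hp
      have hns' : ¬ Sandwich d' := fun h => hns (sandwich_cons h)
      refine Relation.ReflTransGen.head (DequeStep.popLeft O d' [] a) ?_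
      have := ih (a+1) d' (O ++ [a]) hp' hns'
      rw [hsucc]
      simpa using this
    · subst hd
      have hp' : d'.Perm (List.range' (a+1) len) := by
        rw [hsucc] at hp
        have : (a :: d').Perm (a :: List.range' (a+1) len) :=
          ((by simpa using (List.perm_middle (a:=a) (l₁:=d') (l₂:=[])).symm : (a :: d').Perm (d' ++ [a])).trans hp)
        exact (List.perm_cons a).mp this
      have hns' : ¬ Sandwich d' := fun h => hns (sandwich_concat h)
      refine Relation.ReflTransGen.head (DequeStep.popRight O d' [] a) ?_
      have := ih (a+1) d' (O ++ [a]) hp' hns'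
      rw [hsucc]
      simpa using this

lemma lift_par (O D : List ℕ) (f : ℕ → ℕ) {a b : PState}
    (h : Relation.ReflTransGen ParStep a b) :
    Relation.ReflTransGen DequeStep
      ⟨O ++ a.output.map f, a.stack1.map f ++ D ++ (a.stack2.map f).reverse, a.input.map f⟩
      ⟨O ++ b.output.map f, b.stack1.map f ++ D ++ (b.stack2.map f).reverse, b.input.map f⟩ := by
  induction h with
  | refl => exact Relation.ReflTransGen.refl
  | tail _ h2 ih =>
    refine ih.tail ?_
    cases h2 with
    | push1 o s t i x =>
      simpa using DequeStep.pushLeft (O ++ o.map f) (s.map f ++ D ++ (t.map f).reverse) (i.map f) (f x)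
    | push2 o s t i x =>
      have := DequeStep.pushRight (O ++ o.map f) (s.map f ++ D ++ (t.map f).reverse) (i.map f) (f x)
      simpa [List.append_assoc] using this
    | pop1 o s t i x =>
      have := DequeStep.popLeft (O ++ o.map f) (s.map f ++ D ++ (t.map f).reverse) (i.map f) (f x)
      simpa [List.append_assoc] using this
    | pop2 o s t i x =>
      have := DequeStep.popRight (O ++ o.map f) (s.map f ++ D ++ (t.map f).reverse) (i.map f) (f x)
      simpa [List.append_assoc] using this

lemma range'_concat1 (s k : ℕ) : List.range' s (k+1) = List.range' s k ++ [s+k] := by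
  simpa using List.range'_concat (step := 1) (s := s) (n := k)

lemma small_phase (n m i : ℕ) (d : List ℕ) (hd : d ≠ []) (hdi : ∀ x ∈ d, i ≤ x)
    (st : DState) (h : Relation.ReflTransGen DequeStep st ⟨List.range' 1 n, [], []⟩) :
    ∀ c s1 s2 ii, st = ⟨List.range' 1 c, s1 ++ d ++ s2, ii⟩ →
    m ≤ c → c < i →
    (∀ x ∈ s1, m < x ∧ x < i) → (∀ x ∈ s2, m < x ∧ x < i) → (∀ x ∈ ii, m < x ∧ x < i) →
    Relation.ReflTransGen ParStep
      ⟨List.range' 1 (c - m), s1.map (· - m), (s2.map (· - m)).reverse, ii.map (· - m)⟩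
      ⟨List.range' 1 (i - 1 - m), [], [], []⟩ := by
  induction h using Relation.ReflTransGen.head_induction_on with
  | refl =>
    intro c s1 s2 ii heq
    exfalso
    have : s1 ++ d ++ s2 = [] := by
      have := congrArg DState.deque heq; simpa using this.symm
    simp [hd] at this
  | head h' hrest ih =>
    intro c s1 s2 ii heq hmc hci hs1 hs2 hii
    subst heq
    generalize hD : s1 ++ d ++ s2 = DQ at h'
    cases h' with
    | pushLeft o dq ii' x =>
      have step : ParStep ⟨List.range' 1 (c-m), s1.map (· - m), (s2.map (· - m)).reverse, (x :: ii').map (· - m)⟩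
          ⟨List.range' 1 (c-m), (x-m) :: s1.map (· - m), (s2.map (· - m)).reverse, ii'.map (· - m)⟩ := by
        simpa using ParStep.push1 (List.range' 1 (c-m)) (s1.map (· - m)) ((s2.map (· - m)).reverse) (ii'.map (· - m)) (x-m)
      refine Relation.ReflTransGen.head step ?_
      have := ih c (x :: s1) s2 ii' (by simp [hD]) hmc hci
        (by intro z hz; rcases List.mem_cons.mp hz with rfl | hz
            · exact hii _ (by simp)
            · exact hs1 z hz)
        hs2 (fun z hz => hii z (by simp [hz]))
      simpa using this
    | pushRight o dq ii' x =>
      have step : ParStep ⟨List.range' 1 (c-m), s1.map (· - m), (s2.map (· - m)).reverse, (x :: ii').map (· - m)⟩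
          ⟨List.range' 1 (c-m), s1.map (· - m), (x-m) :: (s2.map (· - m)).reverse, ii'.map (· - m)⟩ := by
        simpa using ParStep.push2 (List.range' 1 (c-m)) (s1.map (· - m)) ((s2.map (· - m)).reverse) (ii'.map (· - m)) (x-m)
      refine Relation.ReflTransGen.head step ?_
      have := ih c s1 (s2 ++ [x]) ii' (by simp [← hD]) hmc hci hs1
        (by intro z hz; rcases List.mem_append.mp hz with hz | hz
            · exact hs2 z hz
            · simp at hz; subst hz; exact hii _ (by simp))
        (fun y hy => hii y (by simp [hy]))
      simpa using this
    | popLeft o dqt ii2 x =>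
      obtain ⟨hx, hbig⟩ := key_lemma hrest
      cases s1 with
      | nil =>
        simp only [List.nil_append] at hD
        cases d with
        | nil => exact absurd rfl hd
        | cons d0 dtl =>
          simp only [List.cons_append] at hD
          injection hD with hd0 hdq
          subst hd0
          have hix : i ≤ d0 := hdi d0 (by simp)
          have hieq : i = c + 1 := by omega
          have hs2nil : s2 = [] := by
            rw [List.eq_nil_iff_forall_not_mem]
            intro y hy
            have h1 := (hs2 y hy).2
            have h2 := hbig y (Or.inl (by rw [← hdq]; exact List.mem_append_right _ hy))
            omega
          have hiinil : ii = [] := by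
            rw [List.eq_nil_iff_forall_not_mem]
            intro y hy
            have h1 := (hii y hy).2
            have h2 := hbig y (Or.inr hy)
            omega
          subst hs2nil hiinil
          have : c - m = i - 1 - m := by omega
          rw [this]
          exact Relation.ReflTransGen.refl
      | cons y s1' =>
        simp only [List.cons_append] at hD
        injection hD with hyx hdq
        subst hyx
        have hym := hs1 y (by simp)
        have step : ParStep
            ⟨List.range' 1 (c-m), (y :: s1').map (· - m), (s2.map (· - m)).reverse, ii.map (· - m)⟩
            ⟨List.range' 1 (c-m) ++ [y - m], s1'.map (· - m), (s2.map (· - m)).reverse, ii.map (· - m)⟩ := by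
          simpa using ParStep.pop1 (List.range' 1 (c-m)) (s1'.map (· - m)) ((s2.map (· - m)).reverse) (ii.map (· - m)) (y-m)
        refine Relation.ReflTransGen.head step ?_
        have hout : List.range' 1 (c-m) ++ [y - m] = List.range' 1 (c+1-m) := by
          rw [show c+1-m = (c-m)+1 by omega, range'_concat1]
          congr 2
          omega
        rw [hout]
        have := ih (c+1) s1' s2 ii
          (by rw [← hdq, range'_concat1, show 1+c = y by omega])
          (by omega) (by omega) (fun z hz => hs1 z (by simp [hz])) hs2 hii
        exact this
    | popRight o dqt ii2 x =>
      obtain ⟨hx, hbig⟩ := key_lemma hrest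
      rcases s2.eq_nil_or_concat with rfl | ⟨s2', x2, rfl⟩
      · simp only [List.append_nil] at hD
        rcases d.eq_nil_or_concat with rfl | ⟨d0, xd, rfl⟩
        · exact absurd rfl hd
        · simp only [List.concat_eq_append, ← List.append_assoc] at hD
          have hxd : xd = x := by
            have := congrArg List.getLast? hD
            simpa using this
          subst hxd
          have hdq : s1 ++ d0 = dqt := by
            exact List.append_cancel_right (by simpa using hD)
          have hix : i ≤ xd := hdi xd (by simp)
          have hieq : i = c + 1 := by omega
          have hs1nil : s1 = [] := by
            rw [List.eq_nil_iff_forall_not_mem]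
            intro y hy
            have h1 := (hs1 y hy).2
            have h2 := hbig y (Or.inl (by rw [← hdq]; exact List.mem_append_left _ hy))
            omega
          have hiinil : ii = [] := by
            rw [List.eq_nil_iff_forall_not_mem]
            intro y hy
            have h1 := (hii y hy).2
            have h2 := hbig y (Or.inr hy)
            omega
          subst hs1nil hiinil
          have : c - m = i - 1 - m := by omega
          rw [this]
          exact Relation.ReflTransGen.refl
      · simp only [List.concat_eq_append] at hD ⊢
        rw [← List.append_assoc] at hD
        have hx2 : x2 = x := by
          have := congrArg List.getLast? hD
          simpa using this
        subst hx2
        have hdq : s1 ++ d ++ s2' = dqt := by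
          exact List.append_cancel_right (by simpa [List.append_assoc] using hD)
        have hym := hs2 x2 (by simp)
        have step : ParStep
            ⟨List.range' 1 (c-m), s1.map (· - m), ((s2' ++ [x2]).map (· - m)).reverse, ii.map (· - m)⟩
            ⟨List.range' 1 (c-m) ++ [x2 - m], s1.map (· - m), (s2'.map (· - m)).reverse, ii.map (· - m)⟩ := by
          simpa using ParStep.pop2 (List.range' 1 (c-m)) (s1.map (· - m)) ((s2'.map (· - m)).reverse) (ii.map (· - m)) (x2-m)
        refine Relation.ReflTransGen.head step ?_
        have hout : List.range' 1 (c-m) ++ [x2 - m] = List.range' 1 (c+1-m) := by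
          rw [show c+1-m = (c-m)+1 by omega, range'_concat1]
          congr 2
          omega
        rw [hout]
        have := ih (c+1) s1 s2' ii
          (by rw [← hdq, range'_concat1, show 1+c = x2 by omega])
          (by omega) (by omega) hs1 (fun z hz => hs2 z (by simp [hz])) hii
        exact this

lemma countP_lt_range' (s L x : ℕ) (hx : x ∈ List.range' s L) :
    List.countP (fun y => decide (y < x)) (List.range' s L) = x - s := by
  rw [List.mem_range'_1] at hx
  have h := List.range'_append (s := s) (m := x - s) (n := L - (x - s)) (step := 1)
  simp only [one_mul] at h
  rw [show s + (x - s) = x by omega, show x - s + (L - (x - s)) = L by omega] at h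
  rw [← h, List.countP_append]
  have h1 : List.countP (fun y => decide (y < x)) (List.range' s (x - s))
      = (List.range' s (x - s)).length := by
    rw [List.countP_eq_length]
    intro a ha
    rw [List.mem_range'_1] at ha
    simp only [decide_eq_true_eq]
    omega
  have h2 : List.countP (fun y => decide (y < x)) (List.range' x (L - (x - s))) = 0 := by
    rw [List.countP_eq_zero]
    intro a ha
    rw [List.mem_range'_1] at ha
    simp only [decide_eq_true_eq]
    omega
  rw [List.length_range'] at h1
  omega

lemma map_add_range1 (m L : ℕ) : (List.range' 1 L).map (· + m) = List.range' (m+1) L := by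
  rw [show (fun x : ℕ => x + m) = (fun x => m + x) by funext x; omega, List.map_add_range' (a := m) 1 L 1]


/-- Suppose, in a deque state, the output is the initial segment `1,…,m`, the deque has
end elements `i` and `j` with `i < j`, all elements larger than `i` have already left the
input (every remaining input element is smaller than `i`), and the state is not a
sandwich state. Then the permutation is sortable from this state iff the remaining input,
reduced to a permutation, is sortable on two parallel stacks. -/
theorem deque_tail_iff_twoStack (n : ℕ) (out d inp : List ℕ) (i j : ℕ)
    (hperm : (out ++ d ++ inp).Perm (List.range' 1 n))
    (hout : out = List.range' 1 out.length)
    (hij : i < j)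
    (hends : (d.head? = some i ∧ d.getLast? = some j) ∨
      (d.head? = some j ∧ d.getLast? = some i))
    (hinp : ∀ x ∈ inp, x < i)
    (hnsand : ¬ Sandwich d) :
    Relation.ReflTransGen DequeStep ⟨out, d, inp⟩ ⟨List.range' 1 n, [], []⟩ ↔
      TwoStackSortable (reduceList inp) := by
  have hm : out.length = out.length := rfl
  set m := out.length with hmdef
  have hout' : out = List.range' 1 m := hout
  have hdne : d ≠ [] := by
    rcases hends with ⟨h1, _⟩ | ⟨h1, _⟩ <;> (intro hh; rw [hh] at h1; simp at h1)
  have hi_mem : i ∈ d := by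
    rcases hends with ⟨h1, _⟩ | ⟨_, h1⟩
    · exact List.mem_of_mem_head? (by rw [h1]; simp)
    · exact List.mem_of_mem_getLast? (by rw [h1]; simp)
  have hdi : ∀ x ∈ d, i ≤ x := by
    intro x hx
    by_contra hlt
    push_neg at hlt
    rcases d with _ | ⟨a, d1⟩
    · simp at hx
    rcases d1.eq_nil_or_concat with rfl | ⟨mid, b, rfl⟩
    · rcases hends with ⟨h1, h2⟩ | ⟨h1, h2⟩ <;> simp at h1 h2 <;> simp at hx <;> omega
    · simp only [List.concat_eq_append] at *
      have hhead : (a :: (mid ++ [b])).head? = some a := rfl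
      have hlast : (a :: (mid ++ [b])).getLast? = some b := by
        rw [show a :: (mid ++ [b]) = (a :: mid) ++ [b] by simp, List.getLast?_concat]
      have hab : x < a ∧ x < b := by
        rcases hends with ⟨h1, h2⟩ | ⟨h1, h2⟩ <;>
          rw [hhead] at h1 <;> rw [hlast] at h2 <;>
          simp at h1 h2 <;> omega
      have hxmid : x ∈ mid := by
        simp at hx
        rcases hx with rfl | hx | rfl
        · omega
        · exact hx
        · omega
      obtain ⟨u, w, rfl⟩ := List.append_of_mem hxmid
      exact hnsand ⟨[], u, w, [], a, x, b, by simp, hab.1, hab.2⟩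
  have hlen_n : m + (d.length + inp.length) = n := by
    have := hperm.length_eq; simp at this; omega
  have hsplit : List.range' 1 n = List.range' 1 m ++ List.range' (1+m) (n-m) := by
    have h := List.range'_append (s := 1) (m := m) (n := n-m) (step := 1)
    simp only [one_mul] at h
    rw [show m + (n - m) = n by omega] at h
    exact h.symm
  have hperm2 : (d ++ inp).Perm (List.range' (1+m) (n-m)) := by
    have hp := hperm
    rw [hsplit, List.append_assoc] at hp
    rw [hout'] at hp
    exact (List.perm_append_left_iff _).mp hp
  have hmem2 : ∀ x ∈ d ++ inp, 1 + m ≤ x ∧ x < 1 + m + (n - m) := fun x hx =>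
    List.mem_range'_1.mp (hperm2.subset hx)
  have hmi : m < i := by
    have := hmem2 i (List.mem_append_left _ hi_mem); omega
  have hin : i ≤ n := by
    have := hmem2 i (List.mem_append_left _ hi_mem); omega
  have hsplit2 : List.range' (1+m) (n-m)
      = List.range' (1+m) (i-1-m) ++ List.range' i (n-m-(i-1-m)) := by
    have h := List.range'_append (s := 1+m) (m := i-1-m) (n := n-m-(i-1-m)) (step := 1)
    simp only [one_mul] at h
    rw [show 1 + m + (i-1-m) = i by omega,
        show i-1-m + (n-m-(i-1-m)) = n - m by omega] at h
    exact h.symm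
  have e1 : d.filter (fun y => decide (y < i)) = [] :=
    List.filter_eq_nil_iff.mpr (fun a ha => by
      simp only [decide_eq_true_eq, not_lt]; exact hdi a ha)
  have e2 : inp.filter (fun y => decide (y < i)) = inp :=
    List.filter_eq_self.mpr (fun a ha => by simpa using hinp a ha)
  have e3 : (List.range' (1+m) (i-1-m)).filter (fun y => decide (y < i))
      = List.range' (1+m) (i-1-m) :=
    List.filter_eq_self.mpr (fun a ha => by
      have := List.mem_range'_1.mp ha
      simp only [decide_eq_true_eq]
      omega)
  have e4 : (List.range' i (n-m-(i-1-m))).filter (fun y => decide (y < i)) = [] :=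
    List.filter_eq_nil_iff.mpr (fun a ha => by
      have := List.mem_range'_1.mp ha
      simp only [decide_eq_true_eq, not_lt]
      omega)
  have hinp_perm : inp.Perm (List.range' (1+m) (i-1-m)) := by
    have h := hperm2.filter (fun y => decide (y < i))
    rw [List.filter_append, e1, e2, hsplit2, List.filter_append, e3, e4] at h
    simpa using h
  have hLi : inp.length = i - 1 - m := by simpa using hinp_perm.length_eq
  have f1 : d.filter (fun y => decide (i ≤ y)) = d :=
    List.filter_eq_self.mpr (fun a ha => by simpa using hdi a ha)
  have f2 : inp.filter (fun y => decide (i ≤ y)) = [] :=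
    List.filter_eq_nil_iff.mpr (fun a ha => by
      simp only [decide_eq_true_eq, not_le]; exact hinp a ha)
  have f3 : (List.range' (1+m) (i-1-m)).filter (fun y => decide (i ≤ y)) = [] :=
    List.filter_eq_nil_iff.mpr (fun a ha => by
      have := List.mem_range'_1.mp ha
      simp only [decide_eq_true_eq, not_le]
      omega)
  have f4 : (List.range' i (n-m-(i-1-m))).filter (fun y => decide (i ≤ y))
      = List.range' i (n-m-(i-1-m)) :=
    List.filter_eq_self.mpr (fun a ha => by
      have := List.mem_range'_1.mp ha
      simp only [decide_eq_true_eq]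
      omega)
  have hd_perm : d.Perm (List.range' i (n+1-i)) := by
    have h := hperm2.filter (fun y => decide (i ≤ y))
    rw [List.filter_append, f1, f2, hsplit2, List.filter_append, f3, f4] at h
    rw [show n-m-(i-1-m) = n+1-i by omega] at h
    simpa using h
  have hreduce : reduceList inp = inp.map (· - m) := by
    unfold reduceList
    apply List.map_congr_left
    intro x hxm
    have hx' : x ∈ List.range' (1+m) (i-1-m) := hinp_perm.subset hxm
    have hc : inp.countP (fun y => decide (y < x)) = x - (1+m) := by
      rw [hinp_perm.countP_eq]
      exact countP_lt_range' (1+m) (i-1-m) x hx'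
    rw [List.mem_range'_1] at hx'
    rw [hc]
    omega
  have hsmall : ∀ x ∈ inp, m < x ∧ x < i := by
    intro x hx
    have := List.mem_range'_1.mp (hinp_perm.subset hx)
    omega
  constructor
  · intro h
    have key := small_phase n m i d hdne hdi ⟨out, d, inp⟩ h m [] [] inp
      (by simp [hout']) le_rfl hmi (by simp) (by simp) hsmall
    unfold TwoStackSortable
    rw [hreduce]
    have hlen : (inp.map (· - m)).length = i - 1 - m := by simp [hLi]
    rw [hlen]
    simpa [Nat.sub_self] using key
  · intro h
    unfold TwoStackSortable at h
    have hlift := lift_par out d (· + m) h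
    simp only at hlift
    have hmap1 : (reduceList inp).map (· + m) = inp := by
      rw [hreduce, List.map_map]
      have hcg : ∀ x ∈ inp, ((fun y : ℕ => y + m) ∘ (fun y : ℕ => y - m)) x = id x := by
        intro x hx
        have := (hsmall x hx).1
        simp only [Function.comp_apply, id_eq]
        omega
      rw [List.map_congr_left hcg, List.map_id]
    have hlen2 : (reduceList inp).length = i - 1 - m := by
      rw [hreduce]; simp [hLi]
    rw [hmap1, hlen2, map_add_range1 m (i-1-m)] at hlift
    simp only [List.map_nil, List.append_nil, List.nil_append, List.reverse_nil] at hlift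
    have hout2 : out ++ List.range' (m+1) (i-1-m) = List.range' 1 (i-1) := by
      rw [hout']
      have hh := List.range'_append (s := 1) (m := m) (n := i-1-m) (step := 1)
      simp only [one_mul] at hh
      rw [show 1 + m = m + 1 by omega, show m + (i-1-m) = i - 1 by omega] at hh
      exact hh
    rw [hout2] at hlift
    refine hlift.trans ?_
    have hpop := pop_all (n+1-i) i d (List.range' 1 (i-1)) hd_perm hnsand
    have hfin : List.range' 1 (i-1) ++ List.range' i (n+1-i) = List.range' 1 n := by
      have hh := List.range'_append (s := 1) (m := i-1) (n := n+1-i) (step := 1)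
      simp only [one_mul] at hh
      rw [show 1 + (i-1) = i by omega, show i-1 + (n+1-i) = n by omega] at hh
      exact hh
    rw [hfin] at hpop
    exact hpop
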